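/- Let k ≥ 1 and n ≥ 1 be integers. There exist formal power series p_1,…,p_k, q_1,…,q_k ∈ ℂ[[z]] with p_i(0) = q_i(0) = 0 for all i, such that the identity of polynomials in the variable w, w·∏_{i=1}^k (w − p_i(z))² ≡ (w − z)·∏_{i=1}^k (w − q_i(z))², holds with all coefficients taken modulo z^n, if and only if n ≤ 2k+1. -/

import Mathlib

open Polynomial
open Polynomial.Chebyshev (T U T_one T_two T_add_two T_zero U_zero one_sub_X_sq_mul_U_eq_pol_in_T
  U_eq_X_mul_U_add_T)


lemma coeff_comp_C_mul_X' {R : Type*} [CommSemiring R] (p : R[X]) (r : R) (m : ℕ) :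
    (p.comp (C r * X)).coeff m = r ^ m * p.coeff m := by
  rw [comp_eq_sum_left, Polynomial.sum]
  rw [finset_sum_coeff]
  have : ∀ e ∈ p.support, (C (p.coeff e) * (C r * X) ^ e).coeff m
      = if e = m then r ^ m * p.coeff m else 0 := by
    intro e _
    rw [mul_pow, ← C_pow, ← mul_assoc, ← C_mul, coeff_C_mul, coeff_X_pow]
    by_cases h : e = m
    · simp [h, mul_comm]
    · simp [h, if_neg (Ne.symm h)]
  rw [Finset.sum_congr rfl this, Finset.sum_ite_eq' p.support m]
  by_cases hm : m ∈ p.support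
  · simp [hm]
  · simp [hm, Polynomial.notMem_support_iff.mp hm]


lemma T_deg (m : ℕ) : (T ℂ ((m : ℤ) + 1)).natDegree = m + 1 ∧
    (T ℂ ((m : ℤ) + 1)).coeff (m + 1) = 2 ^ m := by
  induction m using Nat.strong_induction_on with
  | _ m ih =>
    match m with
    | 0 => simp [T_one]
    | 1 =>
      rw [show ((1 : ℕ) : ℤ) + 1 = 2 by norm_num, T_two]
      constructor
      · compute_degree!
      · norm_num [coeff_sub, coeff_ofNat_mul, coeff_X_pow, coeff_one]
    | (m + 2) =>
      have h1 := ih (m + 1) (by omega)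
      have h0 := ih m (by omega)
      push_cast at h1 h0 ⊢
      have hrec : T ℂ ((m : ℤ) + 2 + 1) = 2 * X * T ℂ ((m : ℤ) + 1 + 1) - T ℂ ((m : ℤ) + 1) := by
        have := T_add_two ℂ ((m : ℤ) + 1)
        rw [show (m : ℤ) + 2 + 1 = (m : ℤ) + 1 + 2 by ring, this]
      rw [hrec]
      have hc : (2 * X * T ℂ ((m : ℤ) + 1 + 1)).coeff (m + 2 + 1) = 2 ^ (m + 2) := by
        rw [mul_assoc, show (2 : ℂ[X]) = C 2 from (map_ofNat C 2).symm, coeff_C_mul, coeff_X_mul, h1.2]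
        ring
      have hd : (2 * X * T ℂ ((m : ℤ) + 1 + 1)).natDegree = m + 3 := by
        have hne : T ℂ ((m : ℤ) + 1 + 1) ≠ 0 := fun h => by simp [h] at h1
        rw [mul_assoc, show (2 : ℂ[X]) = C 2 from (map_ofNat C 2).symm, natDegree_C_mul (by norm_num),
          natDegree_X_mul hne, h1.1]
      have hlt : (T ℂ ((m : ℤ) + 1)).natDegree < (2 * X * T ℂ ((m : ℤ) + 1 + 1)).natDegree := by
        rw [hd, h0.1]; omega
      constructor
      · rw [natDegree_sub_eq_left_of_natDegree_lt hlt, hd]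
      · rw [coeff_sub, hc, coeff_eq_zero_of_natDegree_lt (by rw [h0.1]; omega)]
        ring


lemma T_pell (m : ℕ) : (T ℂ ((m : ℤ) + 1)) ^ 2 - 1 = (X ^ 2 - 1) * (U ℂ (m : ℤ)) ^ 2 := by
  induction m with
  | zero => simp [T_one, U_zero]
  | succ m ih =>
    have e1 : T ℂ ((m : ℤ) + 1 + 1) = X * T ℂ ((m : ℤ) + 1) + (X ^ 2 - 1) * U ℂ (m : ℤ) := by
      rw [show (m : ℤ) + 1 + 1 = (m : ℤ) + 2 by ring]
      linear_combination one_sub_X_sq_mul_U_eq_pol_in_T ℂ (m : ℤ)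
    have e2 : U ℂ ((m : ℤ) + 1) = X * U ℂ (m : ℤ) + T ℂ ((m : ℤ) + 1) :=
      U_eq_X_mul_U_add_T ℂ (m : ℤ)
    push_cast
    rw [e1, e2]
    linear_combination ih


lemma T_evals (m : ℕ) : (T ℂ (m : ℤ)).eval 1 = 1 ∧ (T ℂ (m : ℤ)).eval (-1) = (-1) ^ m := by
  induction m using Nat.strong_induction_on with
  | _ m ih =>
    match m with
    | 0 => simp [T_zero]
    | 1 => simp [T_one]
    | (m + 2) =>
      have h0 := ih m (by omega)
      have h1 := ih (m + 1) (by omega)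
      have hrec : T ℂ (((m : ℕ) + 2 : ℕ) : ℤ) = 2 * X * T ℂ ((m : ℤ) + 1) - T ℂ (m : ℤ) := by
        push_cast
        exact T_add_two ℂ (m : ℤ)
      push_cast at h1
      rw [hrec]
      constructor
      · norm_num [eval_sub, eval_mul, h0.1, h1.1]
      · simp only [eval_sub, eval_mul, eval_ofNat, eval_X, h0.2, h1.2]
        push_cast
        ring


lemma T_sq_decomp (k : ℕ) : ∃ A B : ℂ[X], A.natDegree = k ∧ B.natDegree = k ∧
    T ℂ ((2 * k : ℕ) + 1 : ℤ) + 1 = (X + 1) * A ^ 2 ∧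
    T ℂ ((2 * k : ℕ) + 1 : ℤ) - 1 = (X - 1) * B ^ 2 := by
  set Tp : ℂ[X] := T ℂ ((2 * k : ℕ) + 1 : ℤ) with hTp
  have hdeg : Tp.natDegree = 2 * k + 1 := (T_deg (2 * k)).1
  have hTne : Tp ≠ 0 := by
    intro h
    have := (T_deg (2 * k)).2
    rw [← hTp, h] at this
    simp at this
    exact (pow_ne_zero (2 * k) (two_ne_zero (α := ℂ))) this.symm
  have heval1 : Tp.eval 1 = 1 := by
    have := (T_evals (2 * k + 1)).1
    rwa [show ((2 * k + 1 : ℕ) : ℤ) = ((2 * k : ℕ) : ℤ) + 1 by push_cast; ring] at this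
  have hevalm1 : Tp.eval (-1) = -1 := by
    have := (T_evals (2 * k + 1)).2
    rw [show ((2 * k + 1 : ℕ) : ℤ) = ((2 * k : ℕ) : ℤ) + 1 by push_cast; ring] at this
    rw [this, pow_succ, pow_mul]
    norm_num
  obtain ⟨A1, hA1⟩ : (X + 1) ∣ (Tp + 1) := by
    have : IsRoot (Tp + 1) (-1) := by simp [IsRoot, hevalm1]
    simpa [map_neg, sub_neg_eq_add] using dvd_iff_isRoot.mpr this
  obtain ⟨B1, hB1⟩ : (X - 1) ∣ (Tp - 1) := by
    have : IsRoot (Tp - 1) 1 := by simp [IsRoot, heval1]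
    simpa using dvd_iff_isRoot.mpr this
  have hpell : Tp ^ 2 - 1 = (X ^ 2 - 1) * (U ℂ ((2 * k : ℕ) : ℤ)) ^ 2 := T_pell (2 * k)
  have hX2ne : (X ^ 2 - 1 : ℂ[X]) ≠ 0 := by
    intro h
    have := congrArg (eval 0) h
    norm_num at this
  have hprod : A1 * B1 = (U ℂ ((2 * k : ℕ) : ℤ)) ^ 2 := by
    have h2 : (X ^ 2 - 1 : ℂ[X]) * (A1 * B1) = (X ^ 2 - 1) * (U ℂ ((2 * k : ℕ) : ℤ)) ^ 2 := by
      rw [← hpell]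
      have : Tp ^ 2 - 1 = (Tp + 1) * (Tp - 1) := by ring
      rw [this, hA1, hB1]; ring
    exact mul_left_cancel₀ hX2ne h2
  have hcop0 : IsCoprime (Tp + 1) (Tp - 1) := by
    refine ⟨C (1/2 : ℂ), -C (1/2 : ℂ), ?_⟩
    have : C (1/2 : ℂ) * (Tp + 1) + -C (1/2 : ℂ) * (Tp - 1) = C (1/2 : ℂ) * 2 := by ring
    rw [this, show (2 : ℂ[X]) = C 2 from (map_ofNat C 2).symm, ← C_mul]
    norm_num
  have hcop : IsCoprime A1 B1 :=
    ((hcop0.of_isCoprime_of_dvd_left ⟨X + 1, by rw [hA1]; ring⟩).of_isCoprime_of_dvd_right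
      ⟨X - 1, by rw [hB1]; ring⟩)
  -- A1 is a square up to unit
  have hTp1ne : Tp + 1 ≠ 0 := by
    intro h
    have : (Tp + 1).natDegree = 2 * k + 1 := by
      rw [show Tp + 1 = Tp + C 1 by simp, natDegree_add_C, hdeg]
    rw [h] at this; simp at this
  have hTm1ne : Tp - 1 ≠ 0 := by
    intro h
    have : (Tp - 1).natDegree = 2 * k + 1 := by
      rw [show Tp - 1 = Tp + C (-1) by rw [map_neg, C_1]; ring, natDegree_add_C, hdeg]
    rw [h] at this; simp at this
  have hA1ne : A1 ≠ 0 := fun h => hTp1ne (by rw [hA1, h, mul_zero])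
  have hB1ne : B1 ≠ 0 := fun h => hTm1ne (by rw [hB1, h, mul_zero])
  obtain ⟨dA, uA, huA⟩ := exists_associated_pow_of_mul_eq_pow' hcop hprod
  obtain ⟨dB, uB, huB⟩ := exists_associated_pow_of_mul_eq_pow' hcop.symm
    (by rw [mul_comm] at hprod; exact hprod)
  obtain ⟨eA, heAu, heA⟩ := Polynomial.isUnit_iff.mp uA.isUnit
  obtain ⟨eB, heBu, heB⟩ := Polynomial.isUnit_iff.mp uB.isUnit
  obtain ⟨sA, hsA⟩ := IsAlgClosed.exists_pow_nat_eq eA (n := 2) two_pos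
  obtain ⟨sB, hsB⟩ := IsAlgClosed.exists_pow_nat_eq eB (n := 2) two_pos
  set A : ℂ[X] := C sA * dA with hA
  set B : ℂ[X] := C sB * dB with hB
  have hA2 : A ^ 2 = A1 := by
    rw [hA, mul_pow, ← C_pow, hsA, heA, mul_comm]
    exact huA
  have hB2 : B ^ 2 = B1 := by
    rw [hB, mul_pow, ← C_pow, hsB, heB, mul_comm]
    exact huB
  refine ⟨A, B, ?_, ?_, by rw [hA1, hA2], by rw [hB1, hB2]⟩
  · have hd : (Tp + 1).natDegree = 2 * k + 1 := by
      rw [show Tp + 1 = Tp + C 1 by simp, natDegree_add_C, hdeg]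
    have hAne : A ≠ 0 := fun h => hA1ne (by rw [← hA2, h]; ring)
    have : (Tp + 1).natDegree = 1 + 2 * A.natDegree := by
      rw [hA1, ← hA2, natDegree_mul (show (X + 1 : ℂ[X]) ≠ 0 by
        intro h; have := congrArg (eval 0) h; norm_num at this) (pow_ne_zero 2 hAne)]
      · rw [natDegree_pow]
        congr 1
        compute_degree!
    omega
  · have hd : (Tp - 1).natDegree = 2 * k + 1 := by
      rw [show Tp - 1 = Tp + C (-1) by rw [map_neg, C_1]; ring, natDegree_add_C, hdeg]
    have hBne : B ≠ 0 := fun h => hB1ne (by rw [← hB2, h]; ring)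
    have : (Tp - 1).natDegree = 1 + 2 * B.natDegree := by
      rw [hB1, ← hB2, natDegree_mul (show (X - 1 : ℂ[X]) ≠ 0 by
        intro h; have := congrArg (eval 0) h; simp at this) (pow_ne_zero 2 hBne)]
      · rw [natDegree_pow]
        congr 1
        compute_degree!
    omega

-- monic polynomials of degree k split into Fin k indexed linear factors over ℂ
lemma monic_eq_prod (P : ℂ[X]) (k : ℕ) (hm : P.Monic) (hd : P.natDegree = k) :
    ∃ a : Fin k → ℂ, P = ∏ i, (X - C (a i)) := by
  have hsplit : Splits P := IsAlgClosed.splits P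
  have hcard : P.roots.card = k := by
    rw [← hd]
    exact (splits_iff_card_roots.mp hsplit)
  have hprod : P = (P.roots.map fun a => X - C a).prod :=
    hsplit.eq_prod_roots_of_monic hm
  set l := P.roots.toList with hl
  have hlen : l.length = k := by rw [hl, Multiset.length_toList, hcard]
  refine ⟨fun i => l.get (Fin.cast hlen.symm i), ?_⟩
  have h1 : ∏ i : Fin k, (X - C (l.get (Fin.cast hlen.symm i)))
      = ∏ j : Fin l.length, (X - C (l.get j)) :=
    Fintype.prod_equiv (finCongr hlen.symm) _ _ (fun i => rfl)
  have h2 : ∏ j : Fin l.length, (X - C (l.get j)) = (l.map fun a => X - C a).prod := by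
    rw [← Fin.prod_univ_fun_getElem l (fun a => X - C a)]
    rfl
  rw [h1, h2]
  rw [hprod]
  conv_lhs => rw [← Multiset.coe_toList P.roots]
  rw [Multiset.map_coe, Multiset.prod_coe, hl]

lemma keyC' (k : ℕ) : ∃ (a b : Fin k → ℂ) (c : ℂ), c ≠ 0 ∧
    (X : ℂ[X]) * ∏ i, (X - C (a i)) ^ 2 - (X - 1) * ∏ i, (X - C (b i)) ^ 2 = C c := by
  obtain ⟨A, B, hdA, hdB, hA, hB⟩ := T_sq_decomp k
  set u : ℂ[X] := C 2 * X - 1 with hu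
  have hudeg : u.natDegree = 1 := by rw [hu]; compute_degree!
  set A' : ℂ[X] := A.comp u with hA'
  set B' : ℂ[X] := B.comp u with hB'
  have hcompA := congrArg (fun P => P.comp u) hA
  have hcompB := congrArg (fun P => P.comp u) hB
  simp only [add_comp, sub_comp, mul_comp, pow_comp, X_comp, one_comp] at hcompA hcompB
  have heq : (X : ℂ[X]) * A' ^ 2 - (X - 1) * B' ^ 2 = 1 := by
    have hC2 : (C 2 : ℂ[X]) = 2 := map_ofNat C 2
    have hu1 : u + 1 = 2 * X := by rw [hu, hC2]; ring
    have hu2 : u - 1 = 2 * (X - 1) := by rw [hu, hC2]; ring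
    have hdiff : (u + 1) * A' ^ 2 - (u - 1) * B' ^ 2 = 2 := by
      rw [← hcompA, ← hcompB]; ring
    rw [hu1, hu2] at hdiff
    have h2 : (2 : ℂ[X]) * ((X : ℂ[X]) * A' ^ 2 - (X - 1) * B' ^ 2) = 2 * 1 := by
      linear_combination hdiff
    exact mul_left_cancel₀ two_ne_zero h2
  have hA'deg : A'.natDegree = k := by rw [hA', natDegree_comp, hudeg, hdA, mul_one]
  have hB'deg : B'.natDegree = k := by rw [hB', natDegree_comp, hudeg, hdB, mul_one]
  have hA'ne : A' ≠ 0 := by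
    intro h
    have := congrArg (eval 1) heq
    rw [h] at this
    simp at this
  have hB'ne : B' ≠ 0 := by
    intro h
    have := congrArg (eval 0) heq
    rw [h] at this
    simp at this
  set α := A'.leadingCoeff with hα
  set β := B'.leadingCoeff with hβ
  have hαne : α ≠ 0 := leadingCoeff_ne_zero.mpr hA'ne
  have hβne : β ≠ 0 := leadingCoeff_ne_zero.mpr hB'ne
  have hβα : β ^ 2 = α ^ 2 := by
    have hc := congrArg (fun P => P.coeff (2 * k + 1)) heq
    simp only [coeff_sub, sub_mul, one_mul, coeff_X_mul] at hc
    have e1 : (A' ^ 2).coeff (2 * k) = α ^ 2 := by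
      have : (A' ^ 2).natDegree = 2 * k := by rw [natDegree_pow, hA'deg]
      rw [← this, ← leadingCoeff, leadingCoeff_pow]
    have e2 : (B' ^ 2).coeff (2 * k) = β ^ 2 := by
      have : (B' ^ 2).natDegree = 2 * k := by rw [natDegree_pow, hB'deg]
      rw [← this, ← leadingCoeff, leadingCoeff_pow]
    have e3 : (B' ^ 2).coeff (2 * k + 1) = 0 :=
      coeff_eq_zero_of_natDegree_lt (by rw [natDegree_pow, hB'deg]; omega)
    rw [e1, e2, e3, coeff_one] at hc
    norm_num at hc
    linear_combination -hc
  set A'' : ℂ[X] := C α⁻¹ * A' with hA''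
  set B'' : ℂ[X] := C β⁻¹ * B' with hB''
  have hA''m : A''.Monic := by
    rw [Monic, hA'', leadingCoeff_mul, leadingCoeff_C, inv_mul_cancel₀ hαne]
  have hB''m : B''.Monic := by
    rw [Monic, hB'', leadingCoeff_mul, leadingCoeff_C, inv_mul_cancel₀ hβne]
  have hA''d : A''.natDegree = k := by
    rw [hA'', natDegree_C_mul (inv_ne_zero hαne), hA'deg]
  have hB''d : B''.natDegree = k := by
    rw [hB'', natDegree_C_mul (inv_ne_zero hβne), hB'deg]
  obtain ⟨a, ha⟩ := monic_eq_prod A'' k hA''m hA''d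
  obtain ⟨b, hb⟩ := monic_eq_prod B'' k hB''m hB''d
  have hA'eq : A' = C α * A'' := by
    rw [hA'', ← mul_assoc, ← C_mul, mul_inv_cancel₀ hαne, C_1, one_mul]
  have hB'eq : B' = C β * B'' := by
    rw [hB'', ← mul_assoc, ← C_mul, mul_inv_cancel₀ hβne, C_1, one_mul]
  refine ⟨a, b, (α ^ 2)⁻¹, inv_ne_zero (pow_ne_zero 2 hαne), ?_⟩
  have hCβα : (C β : ℂ[X]) ^ 2 = (C α) ^ 2 := by rw [← C_pow, ← C_pow, hβα]
  have heq2 : (X : ℂ[X]) * (C α ^ 2 * A'' ^ 2) - (X - 1) * (C α ^ 2 * B'' ^ 2) = 1 := by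
    linear_combination heq - X * (A' + C α * A'') * hA'eq
      + (X - 1) * (B' + C β * B'') * hB'eq + (X - 1) * B'' ^ 2 * hCβα
  have e : (X : ℂ[X]) * A'' ^ 2 - (X - 1) * B'' ^ 2 = C ((α ^ 2)⁻¹) := by
    have h1 : C (α ^ 2) * ((X : ℂ[X]) * A'' ^ 2 - (X - 1) * B'' ^ 2)
        = C (α ^ 2) * C ((α ^ 2)⁻¹) := by
      rw [← C_mul, mul_inv_cancel₀ (pow_ne_zero 2 hαne), C_1, C_pow]
      linear_combination heq2
    exact mul_left_cancel₀ (C_ne_zero.mpr (pow_ne_zero 2 hαne)) h1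
  rw [Finset.prod_pow, Finset.prod_pow, ← ha, ← hb]
  exact e

lemma comp_eq' (k : ℕ) (α β : Fin k → PowerSeries ℂ) :
    ((X : (PowerSeries ℂ)[X]) * ∏ i, (X - C (PowerSeries.X * α i)) ^ 2
      - (X - C PowerSeries.X) * ∏ i, (X - C (PowerSeries.X * β i)) ^ 2).comp (C PowerSeries.X * X)
    = C (PowerSeries.X ^ (2 * k + 1)) * ((X : (PowerSeries ℂ)[X]) * ∏ i, (X - C (α i)) ^ 2
      - (X - 1) * ∏ i, (X - C (β i)) ^ 2) := by
  have h : ∀ γ : Fin k → PowerSeries ℂ, (∏ i, ((X : (PowerSeries ℂ)[X]) - C (PowerSeries.X * γ i)) ^ 2).comp (C PowerSeries.X * X)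
      = C PowerSeries.X ^ (2 * k) * ∏ i, ((X : (PowerSeries ℂ)[X]) - C (γ i)) ^ 2 := by
    intro γ
    rw [prod_comp]
    have step : ∀ i : Fin k, (((X : (PowerSeries ℂ)[X]) - C (PowerSeries.X * γ i)) ^ 2).comp (C PowerSeries.X * X)
        = (C (PowerSeries.X : PowerSeries ℂ)) ^ 2 * ((X : (PowerSeries ℂ)[X]) - C (γ i)) ^ 2 := by
      intro i
      rw [pow_comp, sub_comp, X_comp, C_comp, C_mul, ← mul_pow, mul_sub]
    rw [Finset.prod_congr rfl (fun i _ => step i), Finset.prod_mul_distrib,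
      Finset.prod_const, Finset.card_univ, Fintype.card_fin, ← pow_mul]
  rw [sub_comp, mul_comp, mul_comp, sub_comp, X_comp, C_comp, h α, h β]
  rw [C_pow]
  ring

/-- There exist power series `p_1,…,p_k, q_1,…,q_k ∈ ℂ[[z]]` vanishing at `0` such that
`w·∏ (w - p_i(z))² ≡ (w - z)·∏ (w - q_i(z))²` holds, as polynomials in `w` with all
coefficients taken modulo `z^n`, if and only if `n ≤ 2k + 1`. -/
theorem stmt_7 (k n : ℕ) (hk : 1 ≤ k) (hn : 1 ≤ n) :
    (∃ p q : Fin k → PowerSeries ℂ,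
      (∀ i, PowerSeries.constantCoeff (p i) = 0) ∧
      (∀ i, PowerSeries.constantCoeff (q i) = 0) ∧
      (∀ m : ℕ, (PowerSeries.X : PowerSeries ℂ) ^ n ∣
        Polynomial.coeff
          ((X : Polynomial (PowerSeries ℂ)) * ∏ i, (X - C (p i)) ^ 2
            - (X - C PowerSeries.X) * ∏ i, (X - C (q i)) ^ 2) m))
    ↔ n ≤ 2 * k + 1 := by
  constructor
  · rintro ⟨p, q, hp, hq, hdvd⟩
    by_contra hn'
    push_neg at hn'
    choose α hα using fun i => (PowerSeries.X_dvd_iff.mpr (hp i))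
    choose β hβ using fun i => (PowerSeries.X_dvd_iff.mpr (hq i))
    set D : (PowerSeries ℂ)[X] :=
      (X : (PowerSeries ℂ)[X]) * ∏ i, (X - C (p i)) ^ 2
        - (X - C PowerSeries.X) * ∏ i, (X - C (q i)) ^ 2 with hD
    set H : (PowerSeries ℂ)[X] :=
      (X : (PowerSeries ℂ)[X]) * ∏ i, (X - C (α i)) ^ 2
        - (X - 1) * ∏ i, (X - C (β i)) ^ 2 with hH
    have hcomp : D.comp (C PowerSeries.X * X) = C (PowerSeries.X ^ (2 * k + 1)) * H := by
      rw [hD]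
      have e1 : ∀ i : Fin k, p i = PowerSeries.X * α i := hα
      have e2 : ∀ i : Fin k, q i = PowerSeries.X * β i := hβ
      simp only [e1, e2]
      exact comp_eq' k α β
    have key : ∀ m, (PowerSeries.X : PowerSeries ℂ) ∣ H.coeff m := by
      intro m
      have h1 : PowerSeries.X ^ m * D.coeff m = PowerSeries.X ^ (2 * k + 1) * H.coeff m := by
        have := coeff_comp_C_mul_X' D PowerSeries.X m
        rw [hcomp, coeff_C_mul] at this
        exact this.symm
      have h2 : (PowerSeries.X : PowerSeries ℂ) ^ (2 * k + 1) * PowerSeries.X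
          ∣ PowerSeries.X ^ (2 * k + 1) * H.coeff m := by
        rw [← h1]
        rw [← pow_succ]
        exact dvd_trans (dvd_trans (pow_dvd_pow _ (by omega)) (hdvd m)) (dvd_mul_left _ _)
      exact (mul_dvd_mul_iff_left (pow_ne_zero (2 * k + 1) PowerSeries.X_ne_zero)).mp h2
    -- reduce mod z
    set cc : PowerSeries ℂ →+* ℂ := (PowerSeries.constantCoeff) with hcc
    have hmap : H.map cc = 0 := by
      ext m
      rw [coeff_map, coeff_zero]
      exact PowerSeries.X_dvd_iff.mp (key m)
    have hmapH : H.map cc = (X : ℂ[X]) * ∏ i, (X - C (cc (α i))) ^ 2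
        - (X - 1) * ∏ i, (X - C (cc (β i))) ^ 2 := by
      simp [hH, Polynomial.map_sub, Polynomial.map_mul, Polynomial.map_prod, Polynomial.map_pow,
        Polynomial.map_one, map_X, map_C]
    have hEq : (X : ℂ[X]) * ∏ i, (X - C (cc (α i))) ^ 2
        = (X - 1) * ∏ i, (X - C (cc (β i))) ^ 2 := by
      have := hmapH.symm.trans hmap
      linear_combination this
    -- root multiplicity contradiction at 1
    set QA : ℂ[X] := ∏ i, (X - C (cc (α i))) with hQA
    set QB : ℂ[X] := ∏ i, (X - C (cc (β i))) with hQB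
    have hQAm : QA.Monic := monic_prod_of_monic _ _ (fun i _ => monic_X_sub_C _)
    have hQBm : QB.Monic := monic_prod_of_monic _ _ (fun i _ => monic_X_sub_C _)
    have hEq2 : (X : ℂ[X]) * QA ^ 2 = (X - 1) * QB ^ 2 := by
      rw [hQA, hQB, ← Finset.prod_pow, ← Finset.prod_pow]
      exact hEq
    have hlhs_ne : (X : ℂ[X]) * QA ^ 2 ≠ 0 :=
      mul_ne_zero X_ne_zero (pow_ne_zero 2 hQAm.ne_zero)
    have hXne : (X : ℂ[X]) ≠ 0 := X_ne_zero
    have hX1ne : (X - 1 : ℂ[X]) ≠ 0 := by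
      intro h; have := congrArg (eval 0) h; simp at this
    have hL : rootMultiplicity 1 ((X : ℂ[X]) * QA ^ 2)
        = rootMultiplicity 1 (X : ℂ[X]) + 2 * rootMultiplicity 1 QA := by
      rw [rootMultiplicity_mul hlhs_ne, show QA ^ 2 = QA * QA by ring,
        rootMultiplicity_mul (mul_ne_zero hQAm.ne_zero hQAm.ne_zero)]
      ring
    have hR : rootMultiplicity 1 ((X - 1 : ℂ[X]) * QB ^ 2)
        = 1 + 2 * rootMultiplicity 1 QB := by
      rw [rootMultiplicity_mul (mul_ne_zero hX1ne (pow_ne_zero 2 hQBm.ne_zero)),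
        show QB ^ 2 = QB * QB by ring,
        rootMultiplicity_mul (mul_ne_zero hQBm.ne_zero hQBm.ne_zero)]
      have : rootMultiplicity 1 (X - 1 : ℂ[X]) = 1 := by
        rw [show (X - 1 : ℂ[X]) = X - C 1 by rw [C_1], rootMultiplicity_X_sub_C_self]
      rw [this]; ring
    have hX0 : rootMultiplicity 1 (X : ℂ[X]) = 0 := by
      rw [rootMultiplicity_eq_zero]
      simp [IsRoot]
    rw [hEq2, hR] at hL
    rw [hX0] at hL
    omega
  · intro hnle
    obtain ⟨a, b, c, hcne, hab⟩ := keyC' k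
    refine ⟨fun i => PowerSeries.X * PowerSeries.C (a i),
      fun i => PowerSeries.X * PowerSeries.C (b i), by simp, by simp, ?_⟩
    intro m
    set D : (PowerSeries ℂ)[X] :=
      (X : (PowerSeries ℂ)[X]) * ∏ i, (X - C (PowerSeries.X * PowerSeries.C (a i))) ^ 2
        - (X - C PowerSeries.X) * ∏ i, (X - C (PowerSeries.X * PowerSeries.C (b i))) ^ 2
      with hD
    have hcomp := comp_eq' k (fun i => PowerSeries.C (a i)) (fun i => PowerSeries.C (b i))
    have hHc : ((X : (PowerSeries ℂ)[X]) * ∏ i, (X - C (PowerSeries.C (a i))) ^ 2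
        - (X - 1) * ∏ i, (X - C (PowerSeries.C (b i))) ^ 2) = C (PowerSeries.C c) := by
      have := congrArg (Polynomial.map (PowerSeries.C)) hab
      simpa [Polynomial.map_sub, Polynomial.map_mul, Polynomial.map_prod, Polynomial.map_pow,
        Polynomial.map_one, map_X, map_C] using this
    rw [hHc] at hcomp
    have h1 : ∀ m', PowerSeries.X ^ m' * D.coeff m'
        = PowerSeries.X ^ (2 * k + 1) * (C (PowerSeries.C c) : (PowerSeries ℂ)[X]).coeff m' := by
      intro m'
      have := coeff_comp_C_mul_X' D PowerSeries.X m'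
      rw [hD] at this ⊢
      rw [hcomp, coeff_C_mul] at this
      exact this.symm
    match m with
    | 0 =>
      have := h1 0
      simp only [pow_zero, one_mul, coeff_C] at this
      rw [this]
      exact Dvd.dvd.mul_right (pow_dvd_pow _ hnle) _
    | (m + 1) =>
      have := h1 (m + 1)
      simp only [coeff_C] at this
      simp at this
      rw [this]
      exact dvd_zero _
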